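/- In any 2-part 2-design, the number of blocks satisfies b ≥ v1 + v2 - 1. -/
import Mathlib

open Finset

/-- Generic double counting lemma. -/
lemma dc_lemma {b : ℕ} {β : Type*} [DecidableEq β] (s : Finset β)
    (A : Fin b → Prop) [DecidablePred A]
    (B : β → Fin b → Prop) [∀ y i, Decidable (B y i)] (m : ℕ)
    (hm : ∀ i, A i → (s.filter (fun y => B y i)).card = m)
    (l : ℕ)
    (hl : ∀ y ∈ s, (univ.filter (fun i => A i ∧ B y i)).card = l) :
    (univ.filter A).card * m = s.card * l := by
  have key : ∀ i : Fin b, (if A i then m else 0)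
      = ∑ y ∈ s, (if A i ∧ B y i then 1 else 0) := by
    intro i
    by_cases hA : A i
    · simp only [if_pos hA, hA, true_and]
      rw [← Finset.card_filter]
      exact (hm i hA).symm
    · simp [hA]
  calc (univ.filter A).card * m
      = ∑ _i ∈ univ.filter A, m := by rw [Finset.sum_const, smul_eq_mul]
    _ = ∑ i : Fin b, (if A i then m else 0) := by rw [Finset.sum_filter]
    _ = ∑ i : Fin b, ∑ y ∈ s, (if A i ∧ B y i then 1 else 0) :=
        Finset.sum_congr rfl fun i _ => key i
    _ = ∑ y ∈ s, ∑ i : Fin b, (if A i ∧ B y i then 1 else 0) := Finset.sum_comm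
    _ = ∑ y ∈ s, (univ.filter (fun i => A i ∧ B y i)).card :=
        Finset.sum_congr rfl fun y _ => (Finset.card_filter _ _).symm
    _ = ∑ _y ∈ s, l := Finset.sum_congr rfl hl
    _ = s.card * l := by rw [Finset.sum_const, smul_eq_mul]

/-- In any 2-part 2-design, b ≥ v1 + v2 - 1. -/
theorem two_part_fisher_bound
    (v1 v2 b k1 k2 l11 l22 l12 : ℕ)
    (S : Fin b → Finset (Fin v1)) (T : Fin b → Finset (Fin v2))
    (hS : ∀ i, (S i).card = k1) (hT : ∀ i, (T i).card = k2)
    (hk1 : 1 < k1) (hk1v : k1 < v1) (hk2 : 1 < k2) (hk2v : k2 < v2)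
    (hl11 : 0 < l11) (hl22 : 0 < l22)
    (h11 : ∀ x y : Fin v1, x ≠ y →
      (Finset.univ.filter (fun i => x ∈ S i ∧ y ∈ S i)).card = l11)
    (h22 : ∀ x y : Fin v2, x ≠ y →
      (Finset.univ.filter (fun i => x ∈ T i ∧ y ∈ T i)).card = l22)
    (h12 : ∀ (x : Fin v1) (y : Fin v2),
      (Finset.univ.filter (fun i => x ∈ S i ∧ y ∈ T i)).card = l12) :
    b + 1 ≥ v1 + v2 := by
  classical
  have hv1pos : 0 < v1 := by omega
  have hv2pos : 0 < v2 := by omega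
  -- replication numbers
  set r1 : Fin v1 → ℕ := fun x => (univ.filter (fun i => x ∈ S i)).card with hr1def
  set r2 : Fin v2 → ℕ := fun y => (univ.filter (fun i => y ∈ T i)).card with hr2def
  have hr1 : ∀ x, r1 x * (k1 - 1) = (v1 - 1) * l11 := by
    intro x
    have h := dc_lemma (univ.erase x) (fun i => x ∈ S i) (fun y i => y ∈ S i)
      (k1 - 1)
      (fun i hA => by
        have he : (univ.erase x).filter (fun y => y ∈ S i) = (S i).erase x := by
          ext y; simp [Finset.mem_erase, and_comm]
        rw [he, Finset.card_erase_of_mem hA, hS])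
      l11
      (fun y hy => h11 x y (fun h => (Finset.mem_erase.mp hy).1 h.symm))
    rwa [Finset.card_erase_of_mem (Finset.mem_univ x), Finset.card_univ,
      Fintype.card_fin] at h
  have hr1c : ∀ x, r1 x * k2 = v2 * l12 := by
    intro x
    have h := dc_lemma (univ : Finset (Fin v2)) (fun i => x ∈ S i)
      (fun y i => y ∈ T i) k2
      (fun i _ => by
        have he : (univ : Finset (Fin v2)).filter (fun y => y ∈ T i) = T i := by
          ext y; simp
        rw [he, hT])
      l12 (fun y _ => h12 x y)
    rwa [Finset.card_univ, Fintype.card_fin] at h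
  have hr2 : ∀ y, r2 y * (k2 - 1) = (v2 - 1) * l22 := by
    intro y
    have h := dc_lemma (univ.erase y) (fun i => y ∈ T i) (fun z i => z ∈ T i)
      (k2 - 1)
      (fun i hA => by
        have he : (univ.erase y).filter (fun z => z ∈ T i) = (T i).erase y := by
          ext z; simp [Finset.mem_erase, and_comm]
        rw [he, Finset.card_erase_of_mem hA, hT])
      l22
      (fun z hz => h22 y z (fun h => (Finset.mem_erase.mp hz).1 h.symm))
    rwa [Finset.card_erase_of_mem (Finset.mem_univ y), Finset.card_univ,
      Fintype.card_fin] at h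
  -- fixed base points
  set x0 : Fin v1 := ⟨0, hv1pos⟩ with hx0def
  set y0 : Fin v2 := ⟨0, hv2pos⟩ with hy0def
  have hr1const : ∀ x, r1 x = r1 x0 := by
    intro x
    have hk : 0 < k1 - 1 := by omega
    exact Nat.eq_of_mul_eq_mul_right hk ((hr1 x).trans (hr1 x0).symm)
  have hr2const : ∀ y, r2 y = r2 y0 := by
    intro y
    have hk : 0 < k2 - 1 := by omega
    exact Nat.eq_of_mul_eq_mul_right hk ((hr2 y).trans (hr2 y0).symm)
  -- strict inequalities r1 > l11, r2 > l22
  have hr1gt : l11 < r1 x0 := by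
    have hstep : l11 * (k1 - 1) < r1 x0 * (k1 - 1) := by
      calc l11 * (k1 - 1) < l11 * (v1 - 1) :=
            Nat.mul_lt_mul_of_le_of_lt (le_refl l11) (by omega) hl11
        _ = (v1 - 1) * l11 := Nat.mul_comm _ _
        _ = r1 x0 * (k1 - 1) := (hr1 x0).symm
    exact Nat.lt_of_mul_lt_mul_right hstep
  have hr2gt : l22 < r2 y0 := by
    have hstep : l22 * (k2 - 1) < r2 y0 * (k2 - 1) := by
      calc l22 * (k2 - 1) < l22 * (v2 - 1) :=
            Nat.mul_lt_mul_of_le_of_lt (le_refl l22) (by omega) hl22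
        _ = (v2 - 1) * l22 := Nat.mul_comm _ _
        _ = r2 y0 * (k2 - 1) := (hr2 y0).symm
    exact Nat.lt_of_mul_lt_mul_right hstep
  -- indicator vectors over ℚ
  set u : Fin v1 → Fin b → ℚ := fun x i => if x ∈ S i then 1 else 0 with hu
  set w : Fin v2 → Fin b → ℚ := fun y i => if y ∈ T i then 1 else 0 with hw
  have dot_uu : ∀ x x' : Fin v1,
      ∑ i, u x i * u x' i
        = ((univ.filter (fun i => x ∈ S i ∧ x' ∈ S i)).card : ℚ) := by
    intro x x'
    rw [Finset.card_filter]
    push_cast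
    refine Finset.sum_congr rfl fun i _ => ?_
    by_cases h1 : x ∈ S i <;> by_cases h2 : x' ∈ S i <;> simp [hu, h1, h2]
  have dot_ww : ∀ y y' : Fin v2,
      ∑ i, w y i * w y' i
        = ((univ.filter (fun i => y ∈ T i ∧ y' ∈ T i)).card : ℚ) := by
    intro y y'
    rw [Finset.card_filter]
    push_cast
    refine Finset.sum_congr rfl fun i _ => ?_
    by_cases h1 : y ∈ T i <;> by_cases h2 : y' ∈ T i <;> simp [hw, h1, h2]
  have dot_wu : ∀ (y : Fin v2) (x : Fin v1), ∑ i, w y i * u x i = (l12 : ℚ) := by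
    intro y x
    rw [← h12 x y, Finset.card_filter]
    push_cast
    refine Finset.sum_congr rfl fun i _ => ?_
    by_cases h1 : x ∈ S i <;> by_cases h2 : y ∈ T i <;> simp [hu, hw, h1, h2]
  have dot_uw : ∀ (x : Fin v1) (y : Fin v2), ∑ i, u x i * w y i = (l12 : ℚ) := by
    intro x y
    rw [← dot_wu y x]
    exact Finset.sum_congr rfl fun i _ => mul_comm _ _
  have dot_uu_diag : ∀ x : Fin v1, ∑ i, u x i * u x i = ((r1 x0 : ℕ) : ℚ) := by
    intro x
    rw [dot_uu x x, ← hr1const x]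
    norm_cast
    simp [hr1def]
  have dot_ww_diag : ∀ y : Fin v2, ∑ i, w y i * w y i = ((r2 y0 : ℕ) : ℚ) := by
    intro y
    rw [dot_ww y y, ← hr2const y]
    norm_cast
    simp [hr2def]
  have dot_uu_off : ∀ x x' : Fin v1, x ≠ x' →
      ∑ i, u x i * u x' i = (l11 : ℚ) := by
    intro x x' hne
    rw [dot_uu x x', h11 x x' hne]
  have dot_ww_off : ∀ y y' : Fin v2, y ≠ y' →
      ∑ i, w y i * w y' i = (l22 : ℚ) := by
    intro y y' hne
    rw [dot_ww y y', h22 y y' hne]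
  have hr1ne : ((r1 x0 : ℚ) - l11) ≠ 0 := by
    have : (l11 : ℚ) < (r1 x0 : ℚ) := by exact_mod_cast hr1gt
    linarith
  have hr2ne : ((r2 y0 : ℚ) - l22) ≠ 0 := by
    have : (l22 : ℚ) < (r2 y0 : ℚ) := by exact_mod_cast hr2gt
    linarith
  -- main independence statement
  have main : ∀ (a : Fin v1 → ℚ) (c : Fin v2 → ℚ),
      (∀ i, (∑ x, a x * u x i) + (∑ y, c y * w y i) = 0) →
      c y0 = 0 → (∀ x, a x = 0) ∧ (∀ y, c y = 0) := by
    intro a c hzero hc0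
    set A := ∑ x, a x with hA
    set C := ∑ y, c y with hC
    have expand : ∀ p : Fin b → ℚ,
        (∑ x, a x * ∑ i, u x i * p i) + (∑ y, c y * ∑ i, w y i * p i) = 0 := by
      intro p
      have h0 : ∑ i, ((∑ x, a x * u x i) + (∑ y, c y * w y i)) * p i = 0 := by
        simp only [hzero, zero_mul, Finset.sum_const_zero]
      rw [← h0]
      simp only [add_mul, Finset.sum_add_distrib, Finset.sum_mul, Finset.mul_sum,
        mul_assoc]
      exact congrArg₂ (· + ·) Finset.sum_comm Finset.sum_comm
    have eq1 : ∀ x' : Fin v1,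
        a x' * ((r1 x0 : ℚ) - l11) + (l11 * A + l12 * C) = 0 := by
      intro x'
      have h := expand (u x')
      have h1 : ∑ x, a x * ∑ i, u x i * u x' i
          = a x' * ((r1 x0 : ℚ) - l11) + l11 * A := by
        have hterm : ∀ x : Fin v1, a x * ∑ i, u x i * u x' i
            = (if x = x' then a x * ((r1 x0 : ℚ) - l11) else 0) + l11 * a x := by
          intro x
          by_cases hxx : x = x'
          · subst hxx
            rw [dot_uu_diag x, if_pos rfl]; ring
          · rw [dot_uu_off x x' hxx, if_neg hxx]; ring
        rw [Finset.sum_congr rfl fun x _ => hterm x, Finset.sum_add_distrib,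
          Finset.sum_ite_eq' univ x' (fun x => a x * ((r1 x0 : ℚ) - l11)),
          if_pos (Finset.mem_univ x'), ← Finset.mul_sum, ← hA]
      have h2 : ∑ y, c y * ∑ i, w y i * u x' i = l12 * C := by
        rw [Finset.sum_congr rfl fun y _ => by rw [dot_wu y x'], ← Finset.sum_mul,
          ← hC, mul_comm]
      rw [h1, h2] at h
      linarith
    have eq2 : ∀ y' : Fin v2,
        c y' * ((r2 y0 : ℚ) - l22) + (l22 * C + l12 * A) = 0 := by
      intro y'
      have h := expand (w y')
      have h1 : ∑ y, c y * ∑ i, w y i * w y' i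
          = c y' * ((r2 y0 : ℚ) - l22) + l22 * C := by
        have hterm : ∀ y : Fin v2, c y * ∑ i, w y i * w y' i
            = (if y = y' then c y * ((r2 y0 : ℚ) - l22) else 0) + l22 * c y := by
          intro y
          by_cases hyy : y = y'
          · subst hyy
            rw [dot_ww_diag y, if_pos rfl]; ring
          · rw [dot_ww_off y y' hyy, if_neg hyy]; ring
        rw [Finset.sum_congr rfl fun y _ => hterm y, Finset.sum_add_distrib,
          Finset.sum_ite_eq' univ y' (fun y => c y * ((r2 y0 : ℚ) - l22)),
          if_pos (Finset.mem_univ y'), ← Finset.mul_sum, ← hC]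
      have h2 : ∑ x, a x * ∑ i, u x i * w y' i = l12 * A := by
        rw [Finset.sum_congr rfl fun x _ => by rw [dot_uw x y'], ← Finset.sum_mul,
          ← hA, mul_comm]
      rw [h1, h2] at h
      linarith
    have hcc : l22 * C + l12 * A = 0 := by
      have h := eq2 y0
      rw [hc0, zero_mul, zero_add] at h
      exact h
    have hcz : ∀ y, c y = 0 := by
      intro y
      have h := eq2 y
      rw [hcc, add_zero] at h
      exact (mul_eq_zero.mp h).resolve_right hr2ne
    have hCz : C = 0 := by rw [hC]; exact Finset.sum_eq_zero fun y _ => hcz y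
    have hsum1 : A * ((r1 x0 : ℚ) - l11) + v1 * (l11 * A + l12 * C) = 0 := by
      have h : ∑ x' : Fin v1,
          (a x' * ((r1 x0 : ℚ) - l11) + (l11 * A + l12 * C)) = 0 :=
        Finset.sum_eq_zero fun x' _ => eq1 x'
      rw [Finset.sum_add_distrib, ← Finset.sum_mul, Finset.sum_const,
        Finset.card_univ, Fintype.card_fin, ← hA, nsmul_eq_mul] at h
      exact h
    have hAz : A = 0 := by
      have hAe : A * ((r1 x0 : ℚ) - l11 + v1 * l11) = 0 := by
        have hre : A * ((r1 x0 : ℚ) - l11 + v1 * l11)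
            = A * ((r1 x0 : ℚ) - l11) + v1 * (l11 * A + l12 * C) := by
          rw [hCz]; ring
        rw [hre, hsum1]
      rcases mul_eq_zero.mp hAe with h | h
      · exact h
      · exfalso
        have h1 : (l11 : ℚ) < (r1 x0 : ℚ) := by exact_mod_cast hr1gt
        have h2 : (0 : ℚ) ≤ (v1 : ℚ) * l11 := by positivity
        linarith
    have haz : ∀ x, a x = 0 := by
      intro x
      have h := eq1 x
      rw [hAz, hCz] at h
      have h0 : a x * ((r1 x0 : ℚ) - l11) = 0 := by linarith
      exact (mul_eq_zero.mp h0).resolve_right hr1ne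
    exact ⟨haz, hcz⟩
  -- linear independence of the family
  set fam : (Fin v1 ⊕ {y : Fin v2 // y ≠ y0}) → (Fin b → ℚ) :=
    fun j => Sum.elim u (fun y => w y.1) j with hfam
  have hli : LinearIndependent ℚ fam := by
    rw [Fintype.linearIndependent_iff]
    intro g hg
    set a : Fin v1 → ℚ := fun x => g (Sum.inl x) with ha
    set c : Fin v2 → ℚ := fun y => if h : y = y0 then 0 else g (Sum.inr ⟨y, h⟩)
      with hc
    have hc0 : c y0 = 0 := by simp [hc]
    have hcval : ∀ y' : {y : Fin v2 // y ≠ y0}, c y'.1 = g (Sum.inr y') := by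
      intro y'
      rw [hc]
      simp only [dif_neg y'.2]
    have hzero : ∀ i, (∑ x, a x * u x i) + (∑ y, c y * w y i) = 0 := by
      intro i
      have hgi := congrFun hg i
      simp only [Finset.sum_apply, Pi.zero_apply, Pi.smul_apply, smul_eq_mul] at hgi
      rw [Fintype.sum_sum_type] at hgi
      have hsub : ∑ y, c y * w y i
          = ∑ y' : {y : Fin v2 // y ≠ y0}, g (Sum.inr y') * w y'.1 i := by
        rw [← Finset.add_sum_erase univ (fun y => c y * w y i) (Finset.mem_univ y0),
          hc0, zero_mul, zero_add,
          Finset.sum_subtype (p := fun y => y ≠ y0) (univ.erase y0)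
            (fun y => by simp [Finset.mem_erase]) (fun y => c y * w y i)]
        exact Finset.sum_congr rfl fun y' _ => by rw [hcval y']
      rw [hsub]
      exact hgi
    have hres := main a c hzero hc0
    intro j
    cases j with
    | inl x => exact hres.1 x
    | inr y' => rw [← hcval y']; exact hres.2 y'.1
  -- conclude with the dimension bound
  have hcard := hli.fintype_card_le_finrank
  rw [Module.finrank_fintype_fun_eq_card, Fintype.card_fin] at hcard
  have hcsub : Fintype.card {y : Fin v2 // y ≠ y0} = v2 - 1 := by
    have h := Fintype.card_subtype_compl (fun y : Fin v2 => y = y0)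
    simp only [Fintype.card_subtype_eq, Fintype.card_fin] at h
    exact h
  rw [Fintype.card_sum, Fintype.card_fin, hcsub] at hcard
  omega
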